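/- For m ≥ 2 the shift σ on Σ = ℤ → Fin m has a nonperiodic Poisson stable point: there exists s ∈ Σ which is not periodic (σⁿ s ≠ s for all n ≥ 1) but is recurrent, i.e., there is a sequence nⱼ → ∞ with d(σ^{nⱼ} s, s) → 0. -/

import Mathlib

open Filter Topology

/-- The shift map on bi-infinite sequences: (shift s) k = s (k+1). -/
def shift (m : ℕ) (s : ℤ → Fin m) : ℤ → Fin m := fun k => s (k + 1)

/-- The metric d(s,t) = ∑_{k} 2^{-|k|} · δ(s k, t k). -/
noncomputable def dSig (m : ℕ) (s t : ℤ → Fin m) : ℝ :=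
  ∑' k : ℤ, (2 : ℝ) ^ (-|k|) * (if s k = t k then 0 else 1)

/-- value sequence: 1 at 0; for k ≠ 0, 1 iff the 2-adic valuation of k is even. -/
def sval (k : ℤ) : ℕ :=
  if k = 0 then 1 else if Even (padicValNat 2 k.natAbs) then 1 else 0

lemma sval_le_one (k : ℤ) : sval k ≤ 1 := by
  unfold sval; split <;> [exact le_refl 1; split <;> simp]

lemma padicValNat_eq_of (a v : ℕ) (h1 : 2 ^ v ∣ a) (h2 : ¬ 2 ^ (v + 1) ∣ a) :
    padicValNat 2 a = v := by
  have ha : a ≠ 0 := by rintro rfl; exact h2 (dvd_zero _)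
  have hle : v ≤ padicValNat 2 a := (padicValNat_dvd_iff_le ha).1 h1
  have hlt : ¬ (v + 1 ≤ padicValNat 2 a) := fun h => h2 ((padicValNat_dvd_iff_le ha).2 h)
  omega

lemma int_two_pow_dvd_iff (v : ℕ) (k : ℤ) : (2 : ℤ) ^ v ∣ k ↔ 2 ^ v ∣ k.natAbs := by
  rw [← Int.natAbs_dvd_natAbs]
  simp [Int.natAbs_pow]

/-- for nonzero k, sval is determined by the valuation. -/
lemma sval_of_ne_zero {k : ℤ} (hk : k ≠ 0) :
    sval k = if Even (padicValNat 2 k.natAbs) then 1 else 0 := by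
  unfold sval; rw [if_neg hk]

/-- the recurrence property: sval is invariant under adding 4^N on the window |k| < 4^N. -/
lemma sval_add_pow (N : ℕ) (k : ℤ) (hk : |k| < 4 ^ N) : sval (k + 4 ^ N) = sval k := by
  have h4 : (4 : ℤ) ^ N = 2 ^ (2 * N) := by
    rw [show (4 : ℤ) = 2 ^ 2 by norm_num, ← pow_mul]
  rcases eq_or_ne k 0 with rfl | hk0
  · have h1 : sval (4 ^ N) = 1 := by
      rw [sval_of_ne_zero (by positivity)]
      have : ((4 : ℤ) ^ N).natAbs = 2 ^ (2 * N) := by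
        rw [h4]; simp [Int.natAbs_pow]
      rw [this, padicValNat.prime_pow]
      simp [Nat.even_mul]
    rw [zero_add, h1]
    simp [sval]
  · set v := padicValNat 2 k.natAbs with hv
    have hka : k.natAbs ≠ 0 := Int.natAbs_ne_zero.2 hk0
    have hd1 : (2 : ℤ) ^ v ∣ k := (int_two_pow_dvd_iff v k).2 pow_padicValNat_dvd
    have hd2 : ¬ (2 : ℤ) ^ (v + 1) ∣ k := fun h =>
      pow_succ_padicValNat_not_dvd hka ((int_two_pow_dvd_iff (v + 1) k).1 h)
    have hvlt : v + 1 ≤ 2 * N := by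
      by_contra h
      push_neg at h
      have h2N : (2 : ℤ) ^ (2 * N) ∣ k := (pow_dvd_pow 2 (by omega)).trans hd1
      have : (2 : ℤ) ^ (2 * N) ≤ |k| :=
        Int.le_of_dvd (abs_pos.2 hk0) ((dvd_abs _ _).2 h2N)
      omega
    have hne : k + 4 ^ N ≠ 0 := by
      intro h
      have hk' : k = -(4 : ℤ) ^ N := by linarith
      rw [hk', abs_neg, abs_of_nonneg (by positivity)] at hk
      exact absurd hk (lt_irrefl _)
    have hdvdP : (2 : ℤ) ^ (v + 1) ∣ 4 ^ N := by
      rw [h4]; exact pow_dvd_pow 2 hvlt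
    have e1 : (2 : ℤ) ^ v ∣ k + 4 ^ N := dvd_add hd1 ((pow_dvd_pow 2 (by omega)).trans hdvdP)
    have e2 : ¬ (2 : ℤ) ^ (v + 1) ∣ k + 4 ^ N := by
      intro h
      exact hd2 (by simpa using dvd_sub h hdvdP)
    have hval : padicValNat 2 (k + 4 ^ N).natAbs = v :=
      padicValNat_eq_of _ _ ((int_two_pow_dvd_iff v _).1 e1)
        (fun h => e2 ((int_two_pow_dvd_iff (v + 1) _).2 h))
    rw [sval_of_ne_zero hne, sval_of_ne_zero hk0, hval]

/-- sval of k ≠ 0 with odd valuation contradiction setup: nonperiodicity. -/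
lemma sval_not_periodic (n : ℕ) (hn : 1 ≤ n) : ∃ k : ℤ, sval (k + n) ≠ sval k := by
  by_contra h
  push_neg at h
  have key : ∀ j : ℕ, sval (j * n) = 1 := by
    intro j
    induction j with
    | zero => simp [sval]
    | succ j ih =>
      have e : ((j + 1 : ℕ) : ℤ) * n = (j : ℤ) * n + n := by push_cast; ring
      rw [e, h ((j : ℤ) * n), ih]
  have hn0 : (n : ℤ) ≠ 0 := by exact_mod_cast Nat.one_le_iff_ne_zero.1 hn
  set a := padicValNat 2 n with ha
  rcases Nat.even_or_odd a with he | ho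
  · -- a even: use j = 2, valuation a + 1 odd
    have h2 := key 2
    have hna : ((2 : ℤ) * n).natAbs = 2 * n := by simp [Int.natAbs_mul]
    have hval : padicValNat 2 (2 * n) = a + 1 := by
      rw [padicValNat.mul (by norm_num) (Nat.one_le_iff_ne_zero.1 hn),
        padicValNat.self (by norm_num)]
      omega
    push_cast at h2
    rw [sval_of_ne_zero (mul_ne_zero two_ne_zero hn0), hna, hval,
      if_neg (by simp [Nat.even_add_one, he])] at h2
    exact absurd h2 (by norm_num)
  · -- a odd: use j = 1
    have h1 := key 1
    push_cast at h1
    rw [one_mul, sval_of_ne_zero hn0] at h1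
    rw [Int.natAbs_natCast, if_neg (Nat.not_even_iff_odd.2 ho)] at h1
    exact absurd h1 (by norm_num)

lemma shift_iterate (m : ℕ) (s : ℤ → Fin m) (n : ℕ) (k : ℤ) :
    (shift m)^[n] s k = s (k + n) := by
  induction n generalizing k with
  | zero => simp
  | succ n ih =>
    rw [Function.iterate_succ_apply']
    show ((shift m)^[n] s) (k + 1) = _
    rw [ih]
    congr 1
    push_cast
    ring

lemma summable_geom_int : Summable (fun k : ℤ => (2 : ℝ) ^ (-|k|)) := by
  have key : ∀ k : ℤ, (2 : ℝ) ^ (-|k|) = ((2:ℝ)⁻¹) ^ k.natAbs := by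
    intro k
    rw [Int.abs_eq_natAbs, zpow_neg, zpow_natCast, inv_pow]
  have hgeom : Summable (fun n : ℕ => ((2:ℝ)⁻¹) ^ n) :=
    summable_geometric_of_lt_one (by norm_num) (by norm_num)
  apply Summable.of_nat_of_neg
  · apply hgeom.congr
    intro n
    rw [key]
    simp
  · apply hgeom.congr
    intro n
    rw [key]
    simp

/-- A nonperiodic Poisson stable (recurrent) point of the shift. -/
theorem poisson_stable_point (m : ℕ) (hm : 2 ≤ m) :
    ∃ s : ℤ → Fin m,
      (∀ n : ℕ, 1 ≤ n → (shift m)^[n] s ≠ s) ∧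
      ∃ nj : ℕ → ℕ, Filter.Tendsto nj Filter.atTop Filter.atTop ∧
        Filter.Tendsto (fun j => dSig m ((shift m)^[nj j] s) s) Filter.atTop (nhds 0) := by
  set s : ℤ → Fin m := fun k => ⟨sval k, lt_of_le_of_lt (sval_le_one k) (by omega)⟩ with hs
  have hinj : ∀ a b : ℤ, s a = s b ↔ sval a = sval b := by
    intro a b; constructor
    · intro h; exact congrArg Fin.val h
    · intro h; simp [hs, h]
  refine ⟨s, ?_, fun j => 4 ^ j, ?_, ?_⟩
  · intro n hn hper
    obtain ⟨k, hk⟩ := sval_not_periodic n hn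
    apply hk
    rw [← hinj]
    have := congrFun hper k
    rw [shift_iterate] at this
    exact this
  · exact tendsto_pow_atTop_atTop_of_one_lt (by norm_num)
  · have h0 : (0 : ℝ) = ∑' _ : ℤ, (0 : ℝ) := by simp
    rw [h0]
    unfold dSig
    apply tendsto_tsum_of_dominated_convergence (bound := fun k : ℤ => (2:ℝ) ^ (-|k|))
      summable_geom_int
    · intro k
      apply Tendsto.congr' ?_ tendsto_const_nhds
      filter_upwards [Filter.eventually_atTop.2 ⟨k.natAbs, fun j hj => hj⟩] with j hj
      have hwin : |k| < 4 ^ j := by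
        have h1 : (k.natAbs : ℤ) ≤ j := by exact_mod_cast hj
        have h2 : (j : ℤ) < 4 ^ j := by exact_mod_cast Nat.lt_pow_self (n := j) (by norm_num)
        rw [Int.abs_eq_natAbs]
        omega
      have heq : (shift m)^[4 ^ j] s k = s k := by
        rw [shift_iterate]
        rw [hinj]
        have := sval_add_pow j k hwin
        push_cast
        exact this
      rw [if_pos heq, mul_zero]
    · filter_upwards with j k
      rw [Real.norm_eq_abs, abs_mul]
      have h1 : |(2:ℝ) ^ (-|k|)| = (2:ℝ) ^ (-|k|) := abs_of_pos (by positivity)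
      rw [h1]
      nth_rewrite 2 [← mul_one ((2:ℝ) ^ (-|k|))]
      gcongr
      split <;> simp
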